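/- arXiv:2512.07098 — 5 statements merged into one kernel-verified Lean document; each statement's English description precedes it below -/
import Mathlib

section
/- Let N be a positive integer and let f ∈ ℚ[X] be a monic polynomial of degree d ≥ 1. Then there exist arbitrarily large positive integers M (that is, for every M₀ there exists M ≥ M₀) such that for every integer i with 1 ≤ i ≤ N, the coefficient of X^(d·M − i) in the power f^M lies in ℤ (i.e., is the image of an integer under the inclusion ℤ → ℚ). -/
open Polynomial Finset

lemma den_mul_int (q : ℚ) (n : ℕ) (h : q.den ∣ n) : ∃ z : ℤ, (n : ℚ) * q = z := by
  obtain ⟨m, rfl⟩ := h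
  refine ⟨m * q.num, ?_⟩
  have hq : (q.den : ℚ) * q = q.num := by
    rw [mul_comm]; exact_mod_cast Rat.mul_den_eq_num q
  push_cast
  rw [mul_comm (q.den : ℚ) (m : ℚ), mul_assoc, hq]

theorem stmt_0 (N : ℕ) (hN : 0 < N) (f : Polynomial ℚ) (d : ℕ) (hd : 1 ≤ d)
    (hmonic : f.Monic) (hdeg : f.natDegree = d) :
    ∀ M₀ : ℕ, ∃ M : ℕ, M₀ ≤ M ∧ 0 < M ∧
      ∀ i : ℕ, 1 ≤ i → i ≤ N →
        (f ^ M).coeff (d * M - i) ∈ Set.range (Int.cast : ℤ → ℚ) := by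
  intro M₀
  set g : Polynomial ℚ := f - Polynomial.X ^ d with hg
  have hfg : f = g + X ^ d := by ring
  have hgdeg : g.natDegree ≤ d - 1 := by
    rcases eq_or_ne g 0 with h0 | h0
    · simp [h0]
    · have : g.degree < (d : ℕ) := by
        have h1 : f.degree = (X ^ d : ℚ[X]).degree := by
          rw [degree_X_pow, degree_eq_natDegree hmonic.ne_zero, hdeg]
        have := degree_sub_lt h1 hmonic.ne_zero (by simp [hmonic.leadingCoeff])
        rwa [h1, degree_X_pow] at this
      have := (natDegree_lt_iff_degree_lt h0).mpr this
      omega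
  set Q : ℕ := ∏ k ∈ Finset.Icc 1 N, ∏ i ∈ Finset.Icc 1 N, ((g ^ k).coeff (d * k - i)).den
    with hQ
  have hQpos : 0 < Q := Finset.prod_pos fun k _ => Finset.prod_pos fun i _ => (Rat.den_pos _)
  set M : ℕ := (M₀ + 1) * (Q * Nat.factorial N) with hM
  have hQN : 0 < Q * Nat.factorial N := Nat.mul_pos hQpos (Nat.factorial_pos N)
  have hMge : M₀ ≤ M := by
    calc M₀ ≤ (M₀ + 1) * 1 := by omega
    _ ≤ M := Nat.mul_le_mul_left _ hQN
  have hMpos : 0 < M := Nat.mul_pos (by omega) hQN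
  have hNM : N ≤ M := by
    calc N ≤ Nat.factorial N := Nat.self_le_factorial N
    _ ≤ Q * Nat.factorial N := Nat.le_mul_of_pos_left _ hQpos
    _ ≤ M := Nat.le_mul_of_pos_left _ (by omega)
  refine ⟨M, hMge, hMpos, ?_⟩
  intro i hi1 hiN
  have hidM : i ≤ d * M := le_trans (le_trans hiN hNM) (Nat.le_mul_of_pos_left _ hd)
  -- divisibility: Q ∣ M.choose k for 1 ≤ k ≤ N
  have hdvd : ∀ k, 1 ≤ k → k ≤ N → Q ∣ M.choose k := by
    intro k hk1 hkN
    have hkfac : k ∣ Nat.factorial N := Nat.dvd_factorial hk1 hkN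
    have hQkM : Q * k ∣ M := by
      have : Q * k ∣ Q * Nat.factorial N := Nat.mul_dvd_mul_left Q hkfac
      exact this.trans (Dvd.intro_left _ rfl)
    have hid : M * (M - 1).choose (k - 1) = M.choose k * k := by
      have := Nat.add_one_mul_choose_eq (M - 1) (k - 1)
      have h1 : M - 1 + 1 = M := by omega
      have h2 : k - 1 + 1 = k := by omega
      simp only [Nat.succ_eq_add_one, h1, h2] at this
      exact this
    have : Q * k ∣ M.choose k * k := hid ▸ hQkM.mul_right _
    exact (Nat.mul_dvd_mul_iff_right (by omega : 0 < k)).mp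
      (by rwa [mul_comm (M.choose k) k, mul_comm Q k, Nat.mul_dvd_mul_iff_left (by omega : 0 < k)] at this ⊢)
  -- expand the coefficient
  have hexp : (f ^ M).coeff (d * M - i) =
      ∑ k ∈ Finset.range (M + 1),
        (if d * (M - k) ≤ d * M - i then
          (g ^ k).coeff (d * M - i - d * (M - k)) * (M.choose k : ℚ) else 0) := by
    rw [hfg, add_pow, finset_sum_coeff]
    refine Finset.sum_congr rfl fun k hk => ?_
    rw [← pow_mul, ← C_eq_natCast, coeff_mul_C, coeff_mul_X_pow']
    split_ifs <;> simp
  rw [hexp]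
  have hSet : Set.range (Int.cast : ℤ → ℚ) = ((Int.castRingHom ℚ).range : Set ℚ) := by
    ext x; simp [RingHom.mem_range]
  rw [hSet]
  refine Subring.sum_mem _ fun k hk => ?_
  simp only [Finset.mem_range] at hk
  split_ifs with hcond
  · -- condition holds
    have hkM : k ≤ M := by omega
    have harith : d * (M - k) + d * k = d * M := by
      rw [← Nat.mul_add]; congr 1; omega
    have hik : i ≤ d * k := by omega
    have hidx : d * M - i - d * (M - k) = d * k - i := by omega
    rw [hidx]
    by_cases hkN : k ≤ N
    · have hk1 : 1 ≤ k := by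
        by_contra h
        have : k = 0 := by omega
        subst this
        simp at hcond
        omega
      -- integrality
      obtain ⟨t, ht⟩ := hdvd k hk1 hkN
      have hden : ((g ^ k).coeff (d * k - i)).den ∣ Q := by
        refine dvd_trans ?_ (Finset.dvd_prod_of_mem _ (Finset.mem_Icc.mpr ⟨hk1, hkN⟩))
        exact Finset.dvd_prod_of_mem _ (Finset.mem_Icc.mpr ⟨hi1, hiN⟩)
      obtain ⟨z, hz⟩ := den_mul_int _ _ (hden.trans ⟨t, ht⟩)
      refine ⟨z, ?_⟩
      simp only [Int.coe_castRingHom]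
      rw [← hz]; ring
    · -- k > N : coefficient is zero
      push_neg at hkN
      have hklt : i < k := by omega
      have h1 : (g ^ k).natDegree ≤ k * (d - 1) :=
        le_trans natDegree_pow_le (Nat.mul_le_mul_left k hgdeg)
      have h2 : k * (d - 1) + k = d * k := by
        rw [Nat.mul_sub, mul_one, mul_comm k d]
        have : k ≤ d * k := Nat.le_mul_of_pos_left _ hd
        omega
      have : (g ^ k).coeff (d * k - i) = 0 :=
        coeff_eq_zero_of_natDegree_lt (by omega)
      rw [this, zero_mul]
      exact Subring.zero_mem _
  · exact Subring.zero_mem _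
end

section
/- Let U ⊆ ℂ be an open bounded subset and let K = ℂ \ U. Suppose there exist a monic polynomial m ∈ ℝ[X] and a real number c > 1 such that |m(x)| ≥ c for all x ∈ K, where m is evaluated on ℂ via the inclusion ℝ → ℂ. Then there exist a monic polynomial p ∈ ℤ[X] and a real number c' > 1 such that |p(x)| ≥ c' for all x ∈ K, where p is evaluated on ℂ via the inclusion ℤ → ℂ. -/
open Polynomial Finset

lemma aux_eval_norm_le (q : Polynomial ℂ) (d : ℕ) (hq : q.natDegree < d) (x : ℂ) :
    ‖q.eval x‖ ≤ (∑ i ∈ range d, ‖q.coeff i‖) * max 1 ‖x‖ ^ (d - 1) := by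
  rw [Polynomial.eval_eq_sum_range' hq]
  calc ‖∑ i ∈ range d, q.coeff i * x ^ i‖ ≤ ∑ i ∈ range d, ‖q.coeff i * x ^ i‖ :=
        norm_sum_le _ _
    _ ≤ ∑ i ∈ range d, ‖q.coeff i‖ * max 1 ‖x‖ ^ (d - 1) := by
        apply Finset.sum_le_sum
        intro i hi
        simp only [Finset.mem_range] at hi
        rw [norm_mul, norm_pow]
        apply mul_le_mul_of_nonneg_left _ (norm_nonneg _)
        calc ‖x‖ ^ i ≤ max 1 ‖x‖ ^ i := by
              apply pow_le_pow_left₀ (norm_nonneg _) (le_max_right _ _)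
          _ ≤ max 1 ‖x‖ ^ (d - 1) := by
              apply pow_le_pow_right₀ (le_max_left _ _)
              omega
    _ = (∑ i ∈ range d, ‖q.coeff i‖) * max 1 ‖x‖ ^ (d - 1) := by rw [Finset.sum_mul]

lemma aux_sum_pow_div (φ : ℝ) (d : ℕ) (hd : 0 < d) (e : ℕ) :
    ∑ k ∈ range (e * d), φ ^ (k / d) = d * ∑ j ∈ range e, φ ^ j := by
  induction e with
  | zero => simp
  | succ e ih =>
    have h1 : (e + 1) * d = e * d + d := by ring
    rw [h1, Finset.sum_range_add, ih, Finset.sum_range_succ]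
    have h2 : ∀ i ∈ range d, φ ^ ((e * d + i) / d) = φ ^ e := by
      intro i hi
      simp only [Finset.mem_range] at hi
      congr 1
      rw [add_comm, mul_comm e d, Nat.add_mul_div_left _ _ hd, Nat.div_eq_of_lt hi]
      omega
    rw [Finset.sum_congr rfl h2, Finset.sum_const, Finset.card_range]
    push_cast
    ring

lemma aux_choose_dvd (D K M r : ℕ) (hD : 0 < D) (hr1 : 1 ≤ r) (hrK : r ≤ K) :
    D ^ K ∣ Nat.choose (K.factorial * D ^ K * M) r := by
  set n := K.factorial * D ^ K * M with hn
  by_cases hM : M = 0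
  · rw [hn, hM]
    rw [Nat.mul_zero, Nat.choose_eq_zero_of_lt (by omega)]
    exact dvd_zero _
  have hrn : r ∣ K.factorial := Nat.dvd_factorial hr1 hrK
  have hrdvd : r ∣ n := hrn.mul_right _ |>.mul_right _
  obtain ⟨s, hs⟩ := hrdvd
  have hDKs : D ^ K ∣ s := by
    obtain ⟨t, ht⟩ := hrn
    have h2 : n = r * (t * D ^ K * M) := by rw [hn, ht]; ring
    have h3 : s = t * D ^ K * M :=
      Nat.eq_of_mul_eq_mul_left (by omega) (hs.symm.trans h2)
    exact ⟨t * M, by rw [h3]; ring⟩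
  have hn1 : 1 ≤ n := by
    have := Nat.factorial_pos K
    have := pow_pos hD K
    have := Nat.pos_of_ne_zero hM
    calc 1 = 1 * 1 * 1 := by ring
      _ ≤ K.factorial * D ^ K * M := by
          apply Nat.mul_le_mul (Nat.mul_le_mul (by omega) (by omega)) (by omega)
  -- key identity: n * choose (n-1) (r-1) = choose n r * r
  obtain ⟨nn, hnn⟩ : ∃ nn, n = nn + 1 := ⟨n - 1, by omega⟩
  obtain ⟨rr, hrr⟩ : ∃ rr, r = rr + 1 := ⟨r - 1, by omega⟩
  have key : n * Nat.choose (n-1) (r-1) = Nat.choose n r * r := by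
    rw [hnn, hrr]
    simpa using Nat.add_one_mul_choose_eq nn rr
  -- n = r * s, so r * (s * choose (n-1) (r-1)) = choose n r * r
  have key2 : s * Nat.choose (n-1) (r-1) = Nat.choose n r := by
    have : r * (s * Nat.choose (n-1) (r-1)) = r * Nat.choose n r := by
      rw [← mul_assoc, ← hs, key, mul_comm]
    exact Nat.eq_of_mul_eq_mul_left (by omega) this
  exact Dvd.dvd.mul_right (hDKs.trans ⟨Nat.choose (n-1) (r-1), key2.symm⟩) 1 |>.trans (by rw [mul_one])

lemma aux_int_coeff (d : ℕ) (hd : 0 < d) (D : ℕ) (hD : 0 < D) (h : Polynomial ℤ)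
    (hh : h.natDegree ≤ d - 1) (K M n : ℕ) (hn : n = K.factorial * D ^ K * M)
    (i : ℕ) (hi : n * d ≤ i + K) :
    ((X ^ d + C ((D:ℝ))⁻¹ * h.map (Int.castRingHom ℝ)) ^ n).coeff i ∈ (⊥ : Subring ℝ) := by
  set w : Polynomial ℝ := C ((D:ℝ))⁻¹ * h.map (Int.castRingHom ℝ) with hw
  have hwdeg : w.natDegree ≤ d - 1 := by
    refine le_trans (natDegree_C_mul_le _ _) (le_trans natDegree_map_le hh)
  have hcomm : X ^ d + w = w + X ^ d := add_comm _ _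
  rw [hcomm, add_pow, Polynomial.finset_sum_coeff]
  apply Subring.sum_mem
  intro r hr
  simp only [Finset.mem_range] at hr
  have hrn : r ≤ n := by omega
  have hXp : (X ^ d : Polynomial ℝ) ^ (n - r) = X ^ (d * (n - r)) := by
    rw [← pow_mul]
  rw [hXp]
  have hcast : ((n.choose r : ℕ) : Polynomial ℝ) = C ((n.choose r : ℕ) : ℝ) := by
    simp
  rw [hcast, Polynomial.coeff_mul_C, Polynomial.coeff_mul_X_pow']
  by_cases hle : d * (n - r) ≤ i
  swap
  · simp only [hle, if_false, zero_mul]; exact Subring.zero_mem _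
  simp only [hle, if_true]
  set u := i - d * (n - r) with hu
  by_cases hr0 : r = 0
  · subst hr0
    rw [pow_zero, Polynomial.coeff_one]
    by_cases hu0 : u = 0
    · simp only [hu0, if_true, one_mul]
      exact ⟨n.choose 0, by simp⟩
    · simp only [hu0, if_false, zero_mul]
      exact Subring.zero_mem _
  have hr1 : 1 ≤ r := by omega
  -- arithmetic facts
  have e1 : d * (n - r) + d * r = d * n := by
    rw [← Nat.mul_add]; congr 1; omega
  have e2 : r * (d - 1) + r = r * d := by
    have hd1 : d - 1 + 1 = d := by omega
    calc r * (d - 1) + r = r * ((d - 1) + 1) := by ring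
      _ = r * d := by rw [hd1]
  have e3 : r * d = d * r := Nat.mul_comm _ _
  by_cases hrK : K < r
  · -- coefficient is zero
    have hdeg : (w ^ r).natDegree < u := by
      have h1 : (w ^ r).natDegree ≤ r * (d - 1) :=
        le_trans natDegree_pow_le (Nat.mul_le_mul_left _ hwdeg)
      have h2 : r * (d - 1) < u := by
        have hin : n * d = d * n := Nat.mul_comm _ _
        omega
      omega
    rw [Polynomial.coeff_eq_zero_of_natDegree_lt hdeg, zero_mul]
    exact Subring.zero_mem _
  push_neg at hrK
  -- main case 1 ≤ r ≤ Kuse divisibility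
  obtain ⟨q, hq⟩ := aux_choose_dvd D K M r hD hr1 hrK
  have hwr : w ^ r = C (((D:ℝ))⁻¹ ^ r) * (h ^ r).map (Int.castRingHom ℝ) := by
    rw [hw, mul_pow, ← C_pow, Polynomial.map_pow]
  rw [hwr, Polynomial.coeff_C_mul, Polynomial.coeff_map]
  set z : ℤ := (h ^ r).coeff u with hz
  refine ⟨z * q * (D:ℤ) ^ (K - r), ?_⟩
  have hchoose : ((n.choose r : ℕ) : ℝ) = (D:ℝ) ^ K * (q:ℝ) := by
    rw [hn, hq]; push_cast; ring
  rw [hchoose]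
  have hDne : (D:ℝ) ≠ 0 := by positivity
  have hKsplit : (D:ℝ) ^ K = (D:ℝ) ^ r * (D:ℝ) ^ (K - r) := by
    rw [← pow_add]; congr 1; omega
  rw [hKsplit]
  push_cast
  have hDr : (D:ℝ) ^ r * ((D:ℝ)⁻¹) ^ r = 1 := by rw [← mul_pow, mul_inv_cancel₀ hDne, one_pow]
  simp only [eq_intCast, Int.cast_mul, Int.cast_pow, Int.cast_natCast]
  linear_combination (-((z:ℝ) * (q:ℝ) * (D:ℝ) ^ (K - r))) * hDr

lemma aux_round (d : ℕ) (hd : 0 < d) (f : Polynomial ℝ) (hf : f.Monic) (hfd : f.natDegree = d)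
    (n e : ℕ) (hen : e ≤ n)
    (hint : ∀ i, e * d ≤ i → (f ^ n).coeff i ∈ (⊥ : Subring ℝ)) :
    ∀ ℓ, ℓ ≤ e * d → ∃ g : Polynomial ℝ,
      g.natDegree ≤ n * d ∧ g.coeff (n * d) = 1 ∧
      (∀ i, e * d - ℓ ≤ i → g.coeff i ∈ (⊥ : Subring ℝ)) ∧
      (∀ x : ℂ, ‖(g.map (algebraMap ℝ ℂ)).eval x - ((f.map (algebraMap ℝ ℂ)).eval x) ^ n‖ ≤
        (1/2) * ∑ k ∈ Finset.Ico (e * d - ℓ) (e * d),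
          (max 1 ‖x‖) ^ (d - 1) * ‖(f.map (algebraMap ℝ ℂ)).eval x‖ ^ (k / d)) := by
  have hfn_deg : (f ^ n).natDegree = n * d := by
    rw [Polynomial.natDegree_pow, hfd]
  have hfn_coeff : (f ^ n).coeff (n * d) = 1 := by
    have := (hf.pow n).coeff_natDegree
    rwa [hfn_deg] at this
  intro ℓ
  induction ℓ with
  | zero =>
    intro _
    refine ⟨f ^ n, le_of_eq hfn_deg, hfn_coeff, by simpa using hint, ?_⟩
    intro x
    rw [Polynomial.map_pow]
    simp
  | succ ℓ ih =>
    intro hl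
    obtain ⟨g, hgdeg, hgtop, hgint, hgbound⟩ := ih (by omega)
    set k₀ := e * d - (ℓ + 1) with hk₀
    have hk₀lt : k₀ < e * d := by omega
    have hk₀nd : k₀ < n * d := by
      have : e * d ≤ n * d := Nat.mul_le_mul_right _ hen
      omega
    set T : Polynomial ℝ := X ^ (k₀ % d) * f ^ (k₀ / d) with hT
    have hTmonic : T.Monic := (monic_X_pow _).mul (hf.pow _)
    have hTdeg : T.natDegree = k₀ := by
      rw [hT, Polynomial.natDegree_mul (monic_X_pow _).ne_zero (hf.pow _).ne_zero,
        Polynomial.natDegree_X_pow, Polynomial.natDegree_pow, hfd]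
      rw [mul_comm (k₀ / d) d]
      exact Nat.mod_add_div k₀ d
    have hTcoeff : T.coeff k₀ = 1 := by
      have := hTmonic.coeff_natDegree
      rwa [hTdeg] at this
    set γ := g.coeff k₀ with hγ
    set ε : ℝ := (round γ : ℝ) - γ with hε
    have hεabs : |ε| ≤ 1 / 2 := by
      rw [hε, abs_sub_comm]
      exact abs_sub_round γ
    set g' := g + C ε * T with hg'
    have hCT_deg : (C ε * T).natDegree ≤ k₀ := le_trans (natDegree_C_mul_le _ _) hTdeg.le
    have hcoeff_high : ∀ i, k₀ < i → g'.coeff i = g.coeff i := by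
      intro i hi
      rw [hg', Polynomial.coeff_add, Polynomial.coeff_eq_zero_of_natDegree_lt (lt_of_le_of_lt hCT_deg hi), add_zero]
    refine ⟨g', ?_, ?_, ?_, ?_⟩
    · rw [hg']
      exact le_trans (natDegree_add_le _ _) (by rw [max_le_iff]; exact ⟨hgdeg, by omega⟩)
    · rw [hcoeff_high _ hk₀nd]; exact hgtop
    · intro i hi
      rcases Nat.lt_or_ge k₀ i with hcase | hcase
      · rw [hcoeff_high _ hcase]
        exact hgint i (by omega)
      · have hik : i = k₀ := by omega
        have hval : g'.coeff i = (round γ : ℝ) := by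
          rw [hik, hg', Polynomial.coeff_add, Polynomial.coeff_C_mul, hTcoeff, mul_one, hε]
          ring
        rw [hval]
        exact ⟨round γ, rfl⟩
    · intro x
      set W := max 1 ‖x‖ with hW
      set φ := ‖(f.map (algebraMap ℝ ℂ)).eval x‖ with hφ
      have hφ0 : 0 ≤ φ := norm_nonneg _
      have hW1 : 1 ≤ W := le_max_left _ _
      have key : (g'.map (algebraMap ℝ ℂ)).eval x - ((f.map (algebraMap ℝ ℂ)).eval x) ^ n
          = ((g.map (algebraMap ℝ ℂ)).eval x - ((f.map (algebraMap ℝ ℂ)).eval x) ^ n)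
            + (algebraMap ℝ ℂ ε) * (x ^ (k₀ % d) * ((f.map (algebraMap ℝ ℂ)).eval x) ^ (k₀ / d)) := by
        rw [hg', Polynomial.map_add, Polynomial.map_mul, Polynomial.map_mul, Polynomial.map_pow,
          Polynomial.map_pow, Polynomial.map_C]
        simp [Polynomial.eval_mul, Polynomial.eval_pow]
        ring
      rw [key]
      have hterm : ‖(algebraMap ℝ ℂ ε) * (x ^ (k₀ % d) * ((f.map (algebraMap ℝ ℂ)).eval x) ^ (k₀ / d))‖
          ≤ (1/2) * (W ^ (d-1) * φ ^ (k₀ / d)) := by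
        rw [norm_mul, norm_mul, norm_pow, norm_pow]
        have h1 : ‖algebraMap ℝ ℂ ε‖ = |ε| := by
          simp [Complex.norm_real]
        rw [h1]
        have h2 : ‖x‖ ^ (k₀ % d) ≤ W ^ (d - 1) := by
          calc ‖x‖ ^ (k₀ % d) ≤ W ^ (k₀ % d) :=
                pow_le_pow_left₀ (norm_nonneg _) (le_max_right _ _) _
            _ ≤ W ^ (d - 1) := by
                apply pow_le_pow_right₀ hW1
                have := Nat.mod_lt k₀ hd
                omega
        calc |ε| * (‖x‖ ^ (k₀ % d) * φ ^ (k₀ / d))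
            ≤ (1/2) * (‖x‖ ^ (k₀ % d) * φ ^ (k₀ / d)) := by
              apply mul_le_mul_of_nonneg_right hεabs
              positivity
          _ ≤ (1/2) * (W ^ (d-1) * φ ^ (k₀ / d)) := by
              apply mul_le_mul_of_nonneg_left _ (by norm_num)
              apply mul_le_mul_of_nonneg_right h2 (by positivity)
      have hsum_split : ∑ k ∈ Finset.Ico (e * d - (ℓ+1)) (e * d), W ^ (d-1) * φ ^ (k / d)
          = W ^ (d-1) * φ ^ (k₀ / d) + ∑ k ∈ Finset.Ico (e * d - ℓ) (e * d), W ^ (d-1) * φ ^ (k / d) := by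
        have h1 : e * d - (ℓ+1) = k₀ := rfl
        have h2 : k₀ + 1 = e * d - ℓ := by omega
        rw [h1, ← Finset.sum_Ico_consecutive _ (by omega : k₀ ≤ k₀ + 1) (by omega : k₀ + 1 ≤ e * d), h2]
        congr 1
        rw [← h2, Nat.Ico_succ_singleton, Finset.sum_singleton]
      calc ‖_ + _‖ ≤ ‖(g.map (algebraMap ℝ ℂ)).eval x - ((f.map (algebraMap ℝ ℂ)).eval x) ^ n‖
            + ‖(algebraMap ℝ ℂ ε) * (x ^ (k₀ % d) * ((f.map (algebraMap ℝ ℂ)).eval x) ^ (k₀ / d))‖ :=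
            norm_add_le _ _
        _ ≤ (1/2) * ∑ k ∈ Finset.Ico (e * d - ℓ) (e * d), W ^ (d-1) * φ ^ (k / d)
            + (1/2) * (W ^ (d-1) * φ ^ (k₀ / d)) := add_le_add (hgbound x) hterm
        _ = (1/2) * ∑ k ∈ Finset.Ico (e * d - (ℓ+1)) (e * d), W ^ (d-1) * φ ^ (k / d) := by
            rw [hsum_split]; ring

lemma aux_geom (φ : ℝ) (hφ : 1 < φ) (e : ℕ) :
    ∑ j ∈ range e, φ ^ j ≤ φ ^ e / (φ - 1) := by
  rw [geom_sum_eq (ne_of_gt hφ)]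
  have h1 : 0 < φ - 1 := by linarith
  gcongr <;> linarith

set_option maxHeartbeats 1000000 in
theorem stmt_1 (U : Set ℂ) (hU : IsOpen U) (hbdd : Bornology.IsBounded U)
    (m : Polynomial ℝ) (hm : m.Monic) (c : ℝ) (hc : 1 < c)
    (hbound : ∀ x ∈ Uᶜ, c ≤ ‖(m.map (algebraMap ℝ ℂ)).eval x‖) :
    ∃ (p : Polynomial ℤ) (c' : ℝ), p.Monic ∧ 1 < c' ∧
      ∀ x ∈ Uᶜ, c' ≤ ‖(p.map (algebraMap ℤ ℂ)).eval x‖ := by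
  -- K is nonempty
  obtain ⟨R₁, hR₁⟩ := hbdd.subset_closedBall 0
  have hKne : ∃ x₀ : ℂ, x₀ ∈ Uᶜ := by
    refine ⟨((|R₁| + 1 : ℝ) : ℂ), fun hmem => ?_⟩
    have := hR₁ hmem
    simp only [Metric.mem_closedBall, Complex.dist_eq, sub_zero] at this
    rw [Complex.norm_real, Real.norm_eq_abs] at this
    have h2 : |R₁| + 1 ≤ R₁ := le_trans (le_abs_self _) this
    have := abs_nonneg R₁
    have := le_abs_self R₁
    linarith
  obtain ⟨x₀, hx₀⟩ := hKne
  set d := m.natDegree with hd_def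
  have hd : 0 < d := by
    by_contra hcon
    push_neg at hcon
    interval_cases d
    · have hm1 : m = 1 := hm.natDegree_eq_zero.mp (by omega)
      have := hbound x₀ hx₀
      rw [hm1] at this
      simp at this
      linarith
  -- constants
  set Cm : ℝ := ∑ i ∈ range d, |m.coeff i| with hCm_def
  have hCm0 : 0 ≤ Cm := Finset.sum_nonneg fun i _ => abs_nonneg _
  set c₁ : ℝ := (c + 1) / 2 with hc₁_def
  have hc₁1 : 1 < c₁ := by rw [hc₁_def]; linarith
  have hc₁c : c₁ < c := by rw [hc₁_def]; linarith
  set A : ℝ := Cm + d + c₁ + 1 with hA_def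
  have hA1 : 1 ≤ A := by
    have : (0:ℝ) ≤ d := Nat.cast_nonneg _
    rw [hA_def]; linarith
  -- denominator D
  obtain ⟨D₀, hD₀⟩ := exists_nat_ge (d * A ^ (d - 1) / (c - c₁))
  set D : ℕ := D₀ + 1 with hD_def
  have hD1 : 1 ≤ D := by omega
  have hDbig : d * A ^ (d - 1) / (c - c₁) ≤ D := by
    refine hD₀.trans ?_
    exact_mod_cast Nat.le_succ D₀
  -- the integer polynomial h approximating D * m (below degree d)
  set h : Polynomial ℤ := ∑ i ∈ range d, monomial i (round ((D:ℝ) * m.coeff i)) with hh_def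
  have hh_deg : h.natDegree ≤ d - 1 := by
    apply Polynomial.natDegree_sum_le_of_forall_le
    intro i hi
    simp only [Finset.mem_range] at hi
    exact le_trans (natDegree_monomial_le _) (by omega)
  have hh_coeff : ∀ i, i < d → h.coeff i = round ((D:ℝ) * m.coeff i) := by
    intro i hi
    rw [hh_def, Polynomial.finset_sum_coeff]
    rw [Finset.sum_eq_single i]
    · rw [Polynomial.coeff_monomial, if_pos rfl]
    · intro b _ hbi
      rw [Polynomial.coeff_monomial, if_neg hbi]
    · intro hni
      exact absurd (Finset.mem_range.mpr hi) hni
  -- the rational approximation f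
  set w : Polynomial ℝ := C ((D:ℝ))⁻¹ * h.map (Int.castRingHom ℝ) with hw_def
  have hw_deg : w.natDegree ≤ d - 1 :=
    le_trans (natDegree_C_mul_le _ _) (le_trans natDegree_map_le hh_deg)
  have hw_degd : w.natDegree < d := by omega
  set f : Polynomial ℝ := X ^ d + w with hf_def
  have hw_degree_lt : w.degree < (d : WithBot ℕ) := by
    apply lt_of_le_of_lt (Polynomial.degree_le_natDegree)
    exact_mod_cast hw_degd
  have hf_monic : f.Monic := monic_X_pow_add hw_degree_lt
  have hf_deg : f.natDegree = d := by
    have h1 : f.degree = d := by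
      rw [hf_def]
      rw [Polynomial.degree_add_eq_left_of_degree_lt (by rwa [Polynomial.degree_X_pow])]
      exact Polynomial.degree_X_pow d
    exact Polynomial.natDegree_eq_of_degree_eq_some h1
  -- coefficient comparison: v := f - m
  set v : Polynomial ℝ := f - m with hv_def
  have hw_coeff : ∀ i, i < d → |w.coeff i - m.coeff i| ≤ 1 / (2 * D) := by
    intro i hi
    rw [hw_def, Polynomial.coeff_C_mul, Polynomial.coeff_map, hh_coeff i hi]
    have hDpos : (0:ℝ) < D := by exact_mod_cast hD1
    have hr : |((round ((D:ℝ) * m.coeff i)):ℝ) - (D:ℝ) * m.coeff i| ≤ 1/2 := by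
      rw [abs_sub_comm]; exact abs_sub_round _
    have key : (↑D:ℝ)⁻¹ * ((round ((D:ℝ) * m.coeff i) : ℤ) : ℝ) - m.coeff i
        = (((round ((D:ℝ) * m.coeff i) : ℤ) : ℝ) - (D:ℝ) * m.coeff i) / D := by
      field_simp
    have : ((Int.castRingHom ℝ) (round ((D:ℝ) * m.coeff i)) : ℝ)
        = ((round ((D:ℝ) * m.coeff i) : ℤ) : ℝ) := rfl
    rw [this, key, abs_div, abs_of_pos hDpos]
    calc |((round ((D:ℝ) * m.coeff i):ℤ):ℝ) - (D:ℝ) * m.coeff i| / D ≤ (1/2) / D := by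
          gcongr
      _ = 1 / (2 * D) := by ring
  have hDpos : (0:ℝ) < D := by exact_mod_cast hD1
  have hm_coeff_d : m.coeff d = 1 := hm.coeff_natDegree
  have hf_coeff : ∀ i, i ≠ d → f.coeff i = w.coeff i := by
    intro i hi
    rw [hf_def, Polynomial.coeff_add, Polynomial.coeff_X_pow, if_neg hi, zero_add]
  have hv_coeff : ∀ i, |v.coeff i| ≤ 1 / (2 * D) := by
    intro i
    rcases lt_trichotomy i d with hlt | heq | hgt
    · rw [hv_def, Polynomial.coeff_sub, hf_coeff i (by omega)]
      exact hw_coeff i hlt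
    · have hz : v.coeff i = 0 := by
        rw [hv_def, Polynomial.coeff_sub, hf_def, Polynomial.coeff_add,
          Polynomial.coeff_X_pow, if_pos heq, heq,
          Polynomial.coeff_eq_zero_of_natDegree_lt hw_degd, hm_coeff_d]
        ring
      rw [hz, abs_zero]; positivity
    · have hz : v.coeff i = 0 := by
        rw [hv_def, Polynomial.coeff_sub, hf_coeff i (by omega),
          Polynomial.coeff_eq_zero_of_natDegree_lt (by omega : w.natDegree < i),
          Polynomial.coeff_eq_zero_of_natDegree_lt (by omega : m.natDegree < i)]
        ring
      rw [hz, abs_zero]; positivity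
  have hv_deg : v.natDegree < d := by
    by_cases hv0 : v = 0
    · rw [hv0]; simpa using hd
    · have h1 : v.degree < f.degree := by
        rw [hv_def]
        apply Polynomial.degree_sub_lt ?_ hf_monic.ne_zero ?_
        · rw [Polynomial.degree_eq_natDegree hf_monic.ne_zero,
            Polynomial.degree_eq_natDegree hm.ne_zero, hf_deg]
        · rw [hf_monic.leadingCoeff, hm.leadingCoeff]
      rw [Polynomial.degree_eq_natDegree hf_monic.ne_zero, hf_deg] at h1
      exact (Polynomial.natDegree_lt_iff_degree_lt hv0).mpr h1
  -- norms of coefficients after mapping to ℂ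
  have hmapnorm : ∀ (q : Polynomial ℝ) (i : ℕ),
      ‖(q.map (algebraMap ℝ ℂ)).coeff i‖ = |q.coeff i| := by
    intro q i
    rw [Polynomial.coeff_map]
    simp [Complex.norm_real, Real.norm_eq_abs]
  set Cf : ℝ := Cm + d with hCf_def
  have hCf0 : 0 ≤ Cf := by
    have : (0:ℝ) ≤ d := Nat.cast_nonneg _
    rw [hCf_def]; linarith
  have Ew : ∀ x : ℂ, ‖(w.map (algebraMap ℝ ℂ)).eval x‖ ≤ Cf * max 1 ‖x‖ ^ (d - 1) := by
    intro x
    refine le_trans (aux_eval_norm_le _ d (lt_of_le_of_lt natDegree_map_le hw_degd) x) ?_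
    have hW0 : (0:ℝ) ≤ max 1 ‖x‖ ^ (d - 1) := by positivity
    apply mul_le_mul_of_nonneg_right ?_ hW0
    calc ∑ i ∈ range d, ‖(w.map (algebraMap ℝ ℂ)).coeff i‖
        ≤ ∑ i ∈ range d, (|m.coeff i| + 1) := by
          apply Finset.sum_le_sum
          intro i hi
          simp only [Finset.mem_range] at hi
          rw [hmapnorm]
          have h1 := hw_coeff i hi
          have h2 : 1 / (2 * (D:ℝ)) ≤ 1 := by
            rw [div_le_one (by positivity)]
            have : (1:ℝ) ≤ D := by exact_mod_cast hD1
            linarith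
          calc |w.coeff i| ≤ |w.coeff i - m.coeff i| + |m.coeff i| := by
                have := abs_sub_abs_le_abs_sub (w.coeff i) (m.coeff i)
                have := abs_add_le (w.coeff i - m.coeff i) (m.coeff i)
                calc |w.coeff i| = |(w.coeff i - m.coeff i) + m.coeff i| := by ring_nf
                  _ ≤ |w.coeff i - m.coeff i| + |m.coeff i| := abs_add_le _ _
            _ ≤ |m.coeff i| + 1 := by linarith
      _ = Cm + d := by
          rw [Finset.sum_add_distrib, Finset.sum_const, Finset.card_range, ← hCm_def]
          simp [mul_comm]
      _ = Cf := hCf_def.symm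
  have Ev : ∀ x : ℂ, ‖(v.map (algebraMap ℝ ℂ)).eval x‖ ≤ (d / (2 * D)) * max 1 ‖x‖ ^ (d - 1) := by
    intro x
    refine le_trans (aux_eval_norm_le _ d (lt_of_le_of_lt natDegree_map_le hv_deg) x) ?_
    have hW0 : (0:ℝ) ≤ max 1 ‖x‖ ^ (d - 1) := by positivity
    apply mul_le_mul_of_nonneg_right ?_ hW0
    calc ∑ i ∈ range d, ‖(v.map (algebraMap ℝ ℂ)).coeff i‖
        ≤ ∑ i ∈ range d, (1 / (2 * (D:ℝ))) := by
          apply Finset.sum_le_sum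
          intro i _
          rw [hmapnorm]
          exact hv_coeff i
      _ = d / (2 * D) := by
          rw [Finset.sum_const, Finset.card_range, nsmul_eq_mul]
          ring
  -- lower bounds for ‖f‖ on ℂ
  have hfC_eval : ∀ x : ℂ, (f.map (algebraMap ℝ ℂ)).eval x
      = x ^ d + (w.map (algebraMap ℝ ℂ)).eval x := by
    intro x
    rw [hf_def, Polynomial.map_add, Polynomial.map_pow, Polynomial.map_X]
    simp
  have E2 : ∀ x : ℂ, ‖x‖ ^ d - Cf * max 1 ‖x‖ ^ (d-1) ≤ ‖(f.map (algebraMap ℝ ℂ)).eval x‖ := by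
    intro x
    have h1 : ‖x ^ d‖ ≤ ‖(f.map (algebraMap ℝ ℂ)).eval x‖ + ‖(w.map (algebraMap ℝ ℂ)).eval x‖ := by
      rw [hfC_eval x]
      have := norm_add_le (x ^ d + (w.map (algebraMap ℝ ℂ)).eval x)
        (-((w.map (algebraMap ℝ ℂ)).eval x))
      simp only [add_neg_cancel_right, norm_neg] at this
      exact this
    have h2 := Ew x
    rw [norm_pow] at h1
    linarith
  have hAC : A - Cf = c₁ + 1 := by rw [hA_def, hCf_def]; ring
  have E5 : ∀ x : ℂ, x ∈ Uᶜ → c₁ ≤ ‖(f.map (algebraMap ℝ ℂ)).eval x‖ := by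
    intro x hx
    by_cases hxA : ‖x‖ ≤ A
    · have hb : c ≤ ‖(m.map (algebraMap ℝ ℂ)).eval x‖ := by
        have := hbound x hx
        exact this
      have hWA : max 1 ‖x‖ ≤ A := max_le hA1 hxA
      have hWpow : max 1 ‖x‖ ^ (d-1) ≤ A ^ (d-1) :=
        pow_le_pow_left₀ (by positivity) hWA _
      have hv1 : ‖(v.map (algebraMap ℝ ℂ)).eval x‖ ≤ (d / (2*D)) * A ^ (d-1) := by
        refine le_trans (Ev x) ?_
        have h0 : (0:ℝ) ≤ d / (2*D) := by positivity
        exact mul_le_mul_of_nonneg_left hWpow h0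
      have hkey : ((d:ℝ) / (2*D)) * A ^ (d-1) ≤ c - c₁ := by
        have h3 : (d:ℝ) * A^(d-1) ≤ D * (c - c₁) := by
          rw [div_le_iff₀ (by linarith : (0:ℝ) < c - c₁)] at hDbig
          linarith
        have heq : ((d:ℝ) / (2*D)) * A ^ (d-1) = ((d:ℝ) * A^(d-1)) / (2*(D:ℝ)) := by ring
        rw [heq, div_le_iff₀ (by positivity : (0:ℝ) < 2*(D:ℝ))]
        nlinarith [h3, mul_nonneg (le_of_lt hDpos) (by linarith : (0:ℝ) ≤ c - c₁)]
      have hm_eq : (m.map (algebraMap ℝ ℂ)).eval x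
          = (f.map (algebraMap ℝ ℂ)).eval x - (v.map (algebraMap ℝ ℂ)).eval x := by
        rw [hv_def, Polynomial.map_sub, Polynomial.eval_sub]
        ring
      have htri : ‖(m.map (algebraMap ℝ ℂ)).eval x‖
          ≤ ‖(f.map (algebraMap ℝ ℂ)).eval x‖ + ‖(v.map (algebraMap ℝ ℂ)).eval x‖ := by
        rw [hm_eq]
        exact norm_sub_le _ _
      linarith
    · push_neg at hxA
      have hx1 : (1:ℝ) ≤ ‖x‖ := le_trans hA1 hxA.le
      have hW : max 1 ‖x‖ = ‖x‖ := max_eq_right hx1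
      have h2 := E2 x
      rw [hW] at h2
      have hxd : ‖x‖ ^ d = ‖x‖ ^ (d-1) * ‖x‖ := by
        rw [← pow_succ]
        congr 1
        omega
      have hpow1 : (1:ℝ) ≤ ‖x‖ ^ (d-1) := one_le_pow₀ hx1
      rw [hxd] at h2
      have h4 : (0:ℝ) < ‖x‖ - Cf := by linarith
      have h5 : c₁ + 1 ≤ ‖x‖ ^ (d-1) * (‖x‖ - Cf) := by
        calc c₁ + 1 = 1 * (c₁ + 1) := by ring
          _ ≤ ‖x‖ ^ (d-1) * (‖x‖ - Cf) := by
              apply mul_le_mul hpow1 (by linarith) (by linarith) (by linarith)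
      have h6 : ‖x‖ ^ (d-1) * (‖x‖ - Cf) = ‖x‖ ^ (d-1) * ‖x‖ - Cf * ‖x‖ ^ (d-1) := by ring
      linarith
  have E6 : ∀ x : ℂ, Cf + 2 ≤ ‖x‖ →
      2 * max 1 ‖x‖ ^ (d-1) ≤ ‖(f.map (algebraMap ℝ ℂ)).eval x‖ := by
    intro x hx
    have hx1 : (1:ℝ) ≤ ‖x‖ := by linarith
    have hW : max 1 ‖x‖ = ‖x‖ := max_eq_right hx1
    have h2 := E2 x
    rw [hW] at h2
    have hxd : ‖x‖ ^ d = ‖x‖ ^ (d-1) * ‖x‖ := by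
      rw [← pow_succ]
      congr 1
      omega
    have hpow1 : (1:ℝ) ≤ ‖x‖ ^ (d-1) := one_le_pow₀ hx1
    rw [hxd] at h2
    rw [hW]
    have h5 : 2 * ‖x‖^(d-1) ≤ ‖x‖^(d-1) * (‖x‖ - Cf) := by
      rw [mul_comm (2:ℝ)]
      apply mul_le_mul_of_nonneg_left (by linarith) (by positivity)
    have h6 : ‖x‖ ^ (d-1) * (‖x‖ - Cf) = ‖x‖ ^ (d-1) * ‖x‖ - Cf * ‖x‖ ^ (d-1) := by ring
    linarith
  -- choose J
  set R₀ : ℝ := Cf + 2 with hR₀_def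
  have hR₀1 : 1 ≤ R₀ := by rw [hR₀_def]; linarith
  obtain ⟨J₁, hJ₁⟩ := pow_unbounded_of_one_lt ((d * R₀ ^ (d-1)) / (c₁ - 1)) hc₁1
  obtain ⟨J₂, hJ₂⟩ := pow_unbounded_of_one_lt (d : ℝ) (by norm_num : (1:ℝ) < 2)
  set J : ℕ := max J₁ J₂ with hJ_def
  have hJa : ((d:ℝ) * R₀ ^ (d-1)) / (c₁ - 1) ≤ c₁ ^ J :=
    le_trans hJ₁.le (pow_le_pow_right₀ hc₁1.le (le_max_left _ _))
  have hJb : (d:ℝ) ≤ 2 ^ J :=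
    le_trans hJ₂.le (pow_le_pow_right₀ (by norm_num) (le_max_right _ _))
  -- choose n
  obtain ⟨n₁, hn₁⟩ := pow_unbounded_of_one_lt (4:ℝ) hc₁1
  set K₀ : ℕ := J * d with hK₀_def
  set M : ℕ := max (J + 1) n₁ with hM_def
  set n : ℕ := K₀.factorial * D ^ K₀ * M with hn_def
  have hnM : M ≤ n := by
    have h1 : 1 ≤ K₀.factorial * D ^ K₀ := by
      have := Nat.factorial_pos K₀
      have : 0 < D ^ K₀ := pow_pos (by omega) _
      have := Nat.factorial_pos K₀
      calc 1 = 1 * 1 := rfl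
        _ ≤ K₀.factorial * D ^ K₀ := Nat.mul_le_mul (Nat.factorial_pos _) (by omega)
    calc M = 1 * M := (one_mul M).symm
      _ ≤ K₀.factorial * D ^ K₀ * M := Nat.mul_le_mul_right _ h1
  have hnJ : J + 1 ≤ n := le_trans (le_max_left _ _) hnM
  have hn₁n : n₁ ≤ n := le_trans (le_max_right _ _) hnM
  have hc₁n : (4:ℝ) ≤ c₁ ^ n := le_trans hn₁.le (pow_le_pow_right₀ hc₁1.le hn₁n)
  set e : ℕ := n - J with he_def
  have hen : e ≤ n := Nat.sub_le _ _
  have heJ : e + J = n := Nat.sub_add_cancel (by omega)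
  have he1 : 1 ≤ e := by omega
  -- integrality of top coefficients of f ^ n
  have hint : ∀ i, e * d ≤ i → (f ^ n).coeff i ∈ (⊥ : Subring ℝ) := by
    intro i hi
    have hmul : e * d + K₀ = n * d := by
      rw [hK₀_def, ← Nat.add_mul, heJ]
    rw [hf_def, hw_def]
    exact aux_int_coeff d hd D (by omega) h hh_deg K₀ M n hn_def i (by omega)
  -- rounding to an integer polynomial
  obtain ⟨g, hgdeg, hgtop, hgint, hgbound⟩ :=
    aux_round d hd f hf_monic hf_deg n e hen hint (e*d) le_rfl
  have hgint' : ∀ i, g.coeff i ∈ (⊥ : Subring ℝ) := fun i => hgint i (by omega)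
  have hgmonic : g.Monic := Polynomial.monic_of_natDegree_le_of_coeff_eq_one _ hgdeg hgtop
  have hglifts : g ∈ Polynomial.lifts (Int.castRingHom ℝ) := by
    rw [Polynomial.lifts_iff_coeff_lifts]
    intro i
    obtain ⟨z, hz⟩ := Subring.mem_bot.mp (hgint' i)
    exact ⟨z, hz⟩
  obtain ⟨p, hpmap, hpdeg, hpmonic⟩ := Polynomial.lifts_and_degree_eq_and_monic hglifts hgmonic
  refine ⟨p, 2, hpmonic, by norm_num, ?_⟩
  intro x hx
  have hcast : p.map (algebraMap ℤ ℂ) = g.map (algebraMap ℝ ℂ) := by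
    rw [← hpmap, Polynomial.map_map]
    congr 1
  rw [hcast]
  set W : ℝ := max 1 ‖x‖ with hW_def
  set φ : ℝ := ‖(f.map (algebraMap ℝ ℂ)).eval x‖ with hφ_def
  have hφc₁ : c₁ ≤ φ := E5 x hx
  have hφ1 : 1 < φ := lt_of_lt_of_le hc₁1 hφc₁
  have hW1 : (1:ℝ) ≤ W := le_max_left _ _
  have hb := hgbound x
  have hsum : ∑ k ∈ Finset.Ico (e*d - e*d) (e*d), W ^ (d-1) * φ ^ (k/d)
      = W ^ (d-1) * ((d:ℝ) * ∑ j ∈ range e, φ ^ j) := by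
    rw [Nat.sub_self, ← Finset.range_eq_Ico, ← Finset.mul_sum, aux_sum_pow_div φ d hd e]
  rw [hsum] at hb
  have hS0 : (0:ℝ) ≤ ∑ j ∈ range e, φ ^ j :=
    Finset.sum_nonneg fun j _ => by positivity
  have hgeom := aux_geom φ hφ1 e
  have hφe_pos : (0:ℝ) < φ ^ e := by positivity
  have hkey : (d:ℝ) * (W ^ (d-1) * ∑ j ∈ range e, φ ^ j) ≤ φ ^ n := by
    have hφJe : φ ^ J * φ ^ e = φ ^ n := by
      rw [← pow_add]
      congr 1
      rw [Nat.add_comm]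
      exact heJ
    by_cases hxR : ‖x‖ ≤ R₀
    · have hWR : W ≤ R₀ := max_le hR₀1 hxR
      have hWp : W ^ (d-1) ≤ R₀ ^ (d-1) := pow_le_pow_left₀ (by positivity) hWR _
      have hgeom2 : (∑ j ∈ range e, φ ^ j) ≤ φ ^ e / (c₁ - 1) := by
        refine hgeom.trans ?_
        apply div_le_div_of_nonneg_left (le_of_lt hφe_pos) (by linarith) (by linarith)
      calc (d:ℝ) * (W ^ (d-1) * ∑ j ∈ range e, φ ^ j)
          ≤ (d:ℝ) * (R₀ ^ (d-1) * (φ ^ e / (c₁ - 1))) := by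
            apply mul_le_mul_of_nonneg_left ?_ (Nat.cast_nonneg _)
            apply mul_le_mul hWp hgeom2 hS0 (by positivity)
        _ = (((d:ℝ) * R₀ ^ (d-1)) / (c₁ - 1)) * φ ^ e := by ring
        _ ≤ c₁ ^ J * φ ^ e := mul_le_mul_of_nonneg_right hJa (le_of_lt hφe_pos)
        _ ≤ φ ^ J * φ ^ e := by
            apply mul_le_mul_of_nonneg_right ?_ (le_of_lt hφe_pos)
            exact pow_le_pow_left₀ (by linarith) hφc₁ _
        _ = φ ^ n := hφJe
    · push_neg at hxR
      have hE6 : 2 * W ^ (d-1) ≤ φ := by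
        rw [hφ_def, hW_def]
        apply E6 x
        rw [hR₀_def] at hxR
        linarith
      have hWp1 : (1:ℝ) ≤ W ^ (d-1) := one_le_pow₀ hW1
      have hφ2 : (2:ℝ) ≤ φ := by nlinarith [hE6, hWp1]
      have hgeom2 : (∑ j ∈ range e, φ ^ j) ≤ 2 * φ ^ e / φ := by
        refine hgeom.trans ?_
        rw [div_le_div_iff₀ (by linarith) (by linarith)]
        nlinarith [hφe_pos]
      calc (d:ℝ) * (W ^ (d-1) * ∑ j ∈ range e, φ ^ j)
          ≤ (d:ℝ) * ((φ/2) * (2 * φ ^ e / φ)) := by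
            apply mul_le_mul_of_nonneg_left ?_ (Nat.cast_nonneg _)
            apply mul_le_mul (by linarith) hgeom2 hS0 (by linarith)
        _ = (d:ℝ) * φ ^ e := by
            field_simp
        _ ≤ 2 ^ J * φ ^ e := mul_le_mul_of_nonneg_right hJb (le_of_lt hφe_pos)
        _ ≤ φ ^ J * φ ^ e := by
            apply mul_le_mul_of_nonneg_right ?_ (le_of_lt hφe_pos)
            exact pow_le_pow_left₀ (by norm_num) hφ2 _
        _ = φ ^ n := hφJe
  -- conclude
  have hbb : ‖(g.map (algebraMap ℝ ℂ)).eval x - ((f.map (algebraMap ℝ ℂ)).eval x) ^ n‖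
      ≤ (1/2) * φ ^ n := by
    refine hb.trans ?_
    have : W ^ (d-1) * ((d:ℝ) * ∑ j ∈ range e, φ ^ j)
        = (d:ℝ) * (W ^ (d-1) * ∑ j ∈ range e, φ ^ j) := by ring
    rw [this]
    linarith [hkey]
  have hnorm_pow : ‖((f.map (algebraMap ℝ ℂ)).eval x) ^ n‖ = φ ^ n := by
    rw [norm_pow]
  have htri : φ ^ n - ‖(g.map (algebraMap ℝ ℂ)).eval x‖
      ≤ ‖(g.map (algebraMap ℝ ℂ)).eval x - ((f.map (algebraMap ℝ ℂ)).eval x) ^ n‖ := by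
    rw [norm_sub_rev]
    calc φ ^ n - ‖(g.map (algebraMap ℝ ℂ)).eval x‖
        = ‖((f.map (algebraMap ℝ ℂ)).eval x) ^ n‖ - ‖(g.map (algebraMap ℝ ℂ)).eval x‖ := by
          rw [hnorm_pow]
      _ ≤ ‖((f.map (algebraMap ℝ ℂ)).eval x) ^ n - (g.map (algebraMap ℝ ℂ)).eval x‖ :=
          norm_sub_norm_le _ _
  have hφn : (4:ℝ) ≤ φ ^ n := by
    refine hc₁n.trans ?_
    exact pow_le_pow_left₀ (by linarith) hφc₁ _
  linarith
end

section
/- Let U ⊆ ℂ be an open bounded subset and let K = ℂ \ U. Suppose there exist a monic polynomial m ∈ ℝ[X] and a real number c > 1 such that |m(x)| ≥ c for all x ∈ K, where m is evaluated on ℂ via the inclusion ℝ → ℂ. Then there exist a monic polynomial f ∈ ℚ[X] and a real number c' > 1 such that |f(x)| ≥ c' for all x ∈ K, where f is evaluated on ℂ via the inclusion ℚ → ℂ. Moreover f can be taken of the same degree as m. -/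
theorem stmt_2 (U : Set ℂ) (hU : IsOpen U) (hbdd : Bornology.IsBounded U)
    (m : Polynomial ℝ) (hm : m.Monic) (c : ℝ) (hc : 1 < c)
    (hbound : ∀ x ∈ Uᶜ, c ≤ ‖(m.map (algebraMap ℝ ℂ)).eval x‖) :
    ∃ (f : Polynomial ℚ) (c' : ℝ), f.Monic ∧ f.natDegree = m.natDegree ∧ 1 < c' ∧
      ∀ x ∈ Uᶜ, c' ≤ ‖(f.map (algebraMap ℚ ℂ)).eval x‖ := by
  classical
  set n := m.natDegree with hn
  -- Uᶜ is nonempty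
  have hUne : Uᶜ.Nonempty := by
    obtain ⟨r, hr⟩ := hbdd.subset_closedBall 0
    refine ⟨((|r| + 1 : ℝ) : ℂ), fun h => ?_⟩
    have h2 := hr h
    simp only [Metric.mem_closedBall, Complex.dist_eq, sub_zero] at h2
    rw [Complex.norm_real, Real.norm_eq_abs] at h2
    have h3 : 0 ≤ |r| := abs_nonneg r
    have h4 : |(|r| + 1)| = |r| + 1 := abs_of_nonneg (by linarith)
    rw [h4] at h2
    have := le_abs_self r
    linarith
  -- n ≥ 1
  have hn1 : 1 ≤ n := by
    by_contra h
    push_neg at h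
    have h0 : n = 0 := by omega
    have hm1 : m = 1 := (hm.natDegree_eq_zero).1 h0
    obtain ⟨x, hx⟩ := hUne
    have := hbound x hx
    rw [hm1] at this
    simp at this
    linarith
  -- constants
  set S : ℝ := ∑ i ∈ Finset.range n, (|m.coeff i| + 1) with hS
  have hS0 : 0 ≤ S := Finset.sum_nonneg fun i _ => by positivity
  set R : ℝ := S + c + 1 with hRdef
  have hR1 : 1 ≤ R := by rw [hRdef]; linarith
  clear_value R
  have hRpow : (0:ℝ) < R ^ (n - 1) := pow_pos (by linarith) _
  have hnpos : (0:ℝ) < n := by exact_mod_cast hn1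
  set ε : ℝ := min 1 ((c - 1) / (2 * n * R ^ (n - 1))) with hε
  have hε0 : 0 < ε := by
    apply lt_min one_pos
    apply div_pos (by linarith)
    positivity
  have hε1 : ε ≤ 1 := min_le_left _ _
  have hεle : ε * (n * R ^ (n - 1)) ≤ (c - 1) / 2 := by
    have h1 : ε ≤ (c - 1) / (2 * n * R ^ (n - 1)) := min_le_right _ _
    have h2 : ε * (n * R ^ (n - 1)) ≤ ((c - 1) / (2 * n * R ^ (n - 1))) * (n * R ^ (n - 1)) :=
      mul_le_mul_of_nonneg_right h1 (by positivity)
    have h3 : ((c - 1) / (2 * n * R ^ (n - 1))) * (n * R ^ (n - 1)) = (c - 1) / 2 := by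
      rw [div_mul_eq_mul_div]
      rw [div_eq_div_iff (by positivity) (by norm_num)]
      ring
    linarith
  clear_value ε
  -- rational approximations
  have hq : ∀ i : ℕ, ∃ qi : ℚ, |m.coeff i - (qi : ℝ)| < ε := fun i =>
    exists_rat_near (m.coeff i) hε0
  choose q hq using hq
  -- the polynomial
  set r : Polynomial ℚ := ∑ i ∈ Finset.range n, Polynomial.C (q i) * Polynomial.X ^ i with hr
  have hrdeg : r.degree < (n : ℕ) := by
    refine lt_of_le_of_lt (Polynomial.degree_sum_le _ _) ?_
    rw [Finset.sup_lt_iff (by exact_mod_cast WithBot.bot_lt_coe n)]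
    intro i hi
    refine lt_of_le_of_lt (Polynomial.degree_C_mul_X_pow_le i (q i)) ?_
    exact_mod_cast Finset.mem_range.mp hi
  set f : Polynomial ℚ := Polynomial.X ^ n + r with hf
  have hfmonic : f.Monic := Polynomial.monic_X_pow_add hrdeg
  have hfdeg : f.natDegree = n := by
    have : f.degree = (n : ℕ) := by
      rw [hf, Polynomial.degree_add_eq_left_of_degree_lt
        (by rwa [Polynomial.degree_X_pow]), Polynomial.degree_X_pow]
    exact Polynomial.natDegree_eq_of_degree_eq_some this
  -- evaluation formulas
  have hfeval : ∀ x : ℂ, (f.map (algebraMap ℚ ℂ)).eval x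
      = x ^ n + ∑ i ∈ Finset.range n, ((q i : ℂ) * x ^ i) := by
    intro x
    simp [hf, hr, Polynomial.map_sum, Polynomial.eval_finset_sum]
  have hmeval : ∀ x : ℂ, (m.map (algebraMap ℝ ℂ)).eval x
      = x ^ n + ∑ i ∈ Finset.range n, (((m.coeff i : ℝ)) : ℂ) * x ^ i := by
    intro x
    rw [Polynomial.eval_map, Polynomial.eval₂_eq_sum_range, ← hn,
      Finset.sum_range_succ, hm.coeff_natDegree]
    simp only [Complex.coe_algebraMap]
    push_cast
    ring
  have hdiff : ∀ x : ℂ, (f.map (algebraMap ℚ ℂ)).eval x - (m.map (algebraMap ℝ ℂ)).eval x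
      = ∑ i ∈ Finset.range n, ((((q i : ℝ) - m.coeff i : ℝ)) : ℂ) * x ^ i := by
    intro x
    rw [hfeval, hmeval]
    have hterm : ∀ i ∈ Finset.range n, ((((q i : ℝ) - m.coeff i : ℝ)) : ℂ) * x ^ i
        = (q i : ℂ) * x ^ i - (((m.coeff i : ℝ)) : ℂ) * x ^ i := by
      intro i _
      push_cast
      ring
    rw [Finset.sum_congr rfl hterm, Finset.sum_sub_distrib]
    ring
  clear_value f r
  refine ⟨f, (c + 1) / 2, hfmonic, hfdeg, by linarith, ?_⟩
  intro x hx
  by_cases hxR : ‖x‖ ≤ R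
  · -- small x : compare with m
    have hmx : c ≤ ‖(m.map (algebraMap ℝ ℂ)).eval x‖ := by
      exact hbound x hx
    have hsmall : ‖(f.map (algebraMap ℚ ℂ)).eval x - (m.map (algebraMap ℝ ℂ)).eval x‖
        ≤ (c - 1) / 2 := by
      rw [hdiff]
      calc ‖∑ i ∈ Finset.range n, ((((q i : ℝ) - m.coeff i : ℝ)) : ℂ) * x ^ i‖
          ≤ ∑ i ∈ Finset.range n, ‖((((q i : ℝ) - m.coeff i : ℝ)) : ℂ) * x ^ i‖ :=
            norm_sum_le _ _
        _ ≤ ∑ i ∈ Finset.range n, ε * R ^ (n - 1) := by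
            refine Finset.sum_le_sum fun i hi => ?_
            rw [norm_mul, norm_pow, Complex.norm_real, Real.norm_eq_abs]
            have h1 : |(q i : ℝ) - m.coeff i| ≤ ε := by
              rw [abs_sub_comm]; exact (hq i).le
            have h2 : ‖x‖ ^ i ≤ R ^ (n - 1) := by
              calc ‖x‖ ^ i ≤ R ^ i := pow_le_pow_left₀ (norm_nonneg x) hxR i
                _ ≤ R ^ (n - 1) := pow_le_pow_right₀ hR1
                    (by have := Finset.mem_range.mp hi; omega)
            exact mul_le_mul h1 h2 (by positivity) hε0.le
        _ = ε * (n * R ^ (n - 1)) := by rw [Finset.sum_const, Finset.card_range]; ring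
        _ ≤ (c - 1) / 2 := hεle
    have habs : ‖(m.map (algebraMap ℝ ℂ)).eval x‖ - ‖(f.map (algebraMap ℚ ℂ)).eval x‖
        ≤ ‖(f.map (algebraMap ℚ ℂ)).eval x - (m.map (algebraMap ℝ ℂ)).eval x‖ := by
      rw [norm_sub_rev]
      exact norm_sub_norm_le _ _
    linarith
  · -- large x
    push_neg at hxR
    have hx1 : 1 ≤ ‖x‖ := by linarith
    have hsum : ‖∑ i ∈ Finset.range n, ((q i : ℂ) * x ^ i)‖ ≤ S * ‖x‖ ^ (n - 1) := by
      calc ‖∑ i ∈ Finset.range n, ((q i : ℂ) * x ^ i)‖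
          ≤ ∑ i ∈ Finset.range n, ‖(q i : ℂ) * x ^ i‖ := norm_sum_le _ _
        _ ≤ ∑ i ∈ Finset.range n, (|m.coeff i| + 1) * ‖x‖ ^ (n - 1) := by
            refine Finset.sum_le_sum fun i hi => ?_
            rw [norm_mul, norm_pow]
            have h1 : ‖(q i : ℂ)‖ ≤ |m.coeff i| + 1 := by
              have he : ‖(q i : ℂ)‖ = |(q i : ℝ)| := by
                rw [show ((q i : ℂ)) = (((q i : ℝ)) : ℂ) by push_cast; ring,
                  Complex.norm_real, Real.norm_eq_abs]
              rw [he]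
              have h6 := hq i
              have h3 : |(q i : ℝ)| - |m.coeff i| ≤ |m.coeff i - (q i : ℝ)| := by
                rw [abs_sub_comm]; exact abs_sub_abs_le_abs_sub _ _
              linarith [h6.le, hε1]
            have h2 : ‖x‖ ^ i ≤ ‖x‖ ^ (n - 1) := pow_le_pow_right₀ hx1
              (by have := Finset.mem_range.mp hi; omega)
            exact mul_le_mul h1 h2 (by positivity) (by positivity)
        _ = S * ‖x‖ ^ (n - 1) := by rw [hS, ← Finset.sum_mul]
    have hxn : ‖x‖ ^ n = ‖x‖ * ‖x‖ ^ (n - 1) := by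
      have h7 : n - 1 + 1 = n := by omega
      calc ‖x‖ ^ n = ‖x‖ ^ (n - 1 + 1) := by rw [h7]
        _ = ‖x‖ * ‖x‖ ^ (n - 1) := by rw [pow_succ]; ring
    have hge : ‖x‖ ^ n - S * ‖x‖ ^ (n - 1) ≤ ‖(f.map (algebraMap ℚ ℂ)).eval x‖ := by
      rw [hfeval]
      have h4 : ‖x ^ n‖ - ‖∑ i ∈ Finset.range n, ((q i : ℂ) * x ^ i)‖
          ≤ ‖x ^ n + ∑ i ∈ Finset.range n, ((q i : ℂ) * x ^ i)‖ := by
        have h5 := norm_sub_le (x ^ n + ∑ i ∈ Finset.range n, ((q i : ℂ) * x ^ i))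
          (∑ i ∈ Finset.range n, ((q i : ℂ) * x ^ i))
        simp only [add_sub_cancel_right] at h5
        linarith
      rw [norm_pow] at h4
      linarith
    have hpow1 : 1 ≤ ‖x‖ ^ (n - 1) := one_le_pow₀ hx1
    have heq : ‖x‖ ^ n - S * ‖x‖ ^ (n - 1) = (‖x‖ - S) * ‖x‖ ^ (n - 1) := by
      rw [hxn]; ring
    rw [heq] at hge
    have hfac : (c + 1) ≤ (‖x‖ - S) * ‖x‖ ^ (n - 1) := by
      have h5 : c + 1 ≤ ‖x‖ - S := by rw [hRdef] at hxR; linarith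
      calc (c + 1 : ℝ) = (c + 1) * 1 := by ring
        _ ≤ (‖x‖ - S) * ‖x‖ ^ (n - 1) :=
            mul_le_mul h5 hpow1 zero_le_one (by linarith)
    linarith
end

section
/- Let f ∈ ℚ[X] be a monic polynomial of degree d ≥ 1, let N be a positive integer, and let k be a positive integer such that k · (coefficient of X^j in f) ∈ ℤ for every j < d. Then for every positive integer n and every integer i with 0 ≤ i ≤ N, one has k^N · (coefficient of X^(n·d − i) in f^n) ∈ ℤ. -/
theorem stmt_8 (f : Polynomial ℚ) (d : ℕ) (hd : 1 ≤ d) (hmonic : f.Monic)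
    (hdeg : f.natDegree = d) (N : ℕ) (hN : 0 < N) (k : ℕ) (hk : 0 < k)
    (hint : ∀ j < d, (k : ℚ) * f.coeff j ∈ Set.range (Int.cast : ℤ → ℚ)) :
    ∀ n : ℕ, 0 < n → ∀ i : ℕ, i ≤ N →
      (k : ℚ) ^ N * (f ^ n).coeff (n * d - i) ∈ Set.range (Int.cast : ℤ → ℚ) := by
  set S := (Int.castRingHom ℚ).range with hS
  have hrange : ∀ x : ℚ, x ∈ Set.range (Int.cast : ℤ → ℚ) ↔ x ∈ S := by
    intro x
    simp [hS, RingHom.mem_range]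
  have hkS : (k : ℚ) ∈ S := ⟨k, by simp⟩
  have key : ∀ n m : ℕ, (k : ℚ) ^ (n * d - m) * (f ^ n).coeff m ∈ S := by
    intro n
    induction n with
    | zero =>
      intro m
      simp only [Nat.zero_mul, Nat.zero_sub, pow_zero, one_mul, pow_zero, Polynomial.coeff_one]
      split
      · exact one_mem S
      · exact zero_mem S
    | succ n ih =>
      intro m
      rw [pow_succ, Polynomial.coeff_mul, Finset.mul_sum]
      refine Subring.sum_mem S ?_
      rintro ⟨a, b⟩ hab
      rw [Finset.HasAntidiagonal.mem_antidiagonal] at hab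
      simp only at hab
      subst hab
      by_cases hb : d < b
      · have : f.coeff b = 0 := Polynomial.coeff_eq_zero_of_natDegree_lt (by omega)
        simp [this, zero_mem]
      · by_cases ha : n * d < a
        · have : (f ^ n).coeff a = 0 := Polynomial.coeff_eq_zero_of_natDegree_lt
            (by rw [hmonic.natDegree_pow, hdeg]; omega)
          simp [this, zero_mem]
        · push_neg at hb ha
          by_cases hbd : b = d
          · have hcb : f.coeff b = 1 := by
              rw [hbd, ← hdeg]; exact hmonic.coeff_natDegree
            have hnd : (n + 1) * d = n * d + d := by ring
            have he : (n + 1) * d - (a + b) = n * d - a := by subst hbd; omega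
            rw [hcb, he, mul_one]
            exact ih a
          · have hb' : b < d := lt_of_le_of_ne hb hbd
            have he : (n + 1) * d - (a + b) = (n * d - a) + 1 + (d - b - 1) := by
              have hnd : (n + 1) * d = n * d + d := by ring
              omega
            have heq : (k : ℚ) ^ ((n + 1) * d - (a + b)) * ((f ^ n).coeff a * f.coeff b)
                = ((k : ℚ) ^ (n * d - a) * (f ^ n).coeff a) *
                  (((k : ℚ) * f.coeff b) * (k : ℚ) ^ (d - b - 1)) := by
              rw [he]; ring
            rw [heq]
            exact mul_mem (ih a)
              (mul_mem ((hrange _).mp (hint b hb')) (pow_mem hkS _))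
  intro n _ i hi
  rw [hrange]
  have he : n * d - (n * d - i) ≤ N := by omega
  have : (k : ℚ) ^ N = (k : ℚ) ^ (N - (n * d - (n * d - i))) *
      (k : ℚ) ^ (n * d - (n * d - i)) := by
    rw [← pow_add]; congr 1; omega
  rw [this, mul_assoc]
  exact mul_mem (pow_mem hkS _) (key n (n * d - i))
end

section
/- Let U ⊆ ℂ be open, let φ : ℂ → ℂ be analytic on U, let p ∈ ℤ[X] be monic of degree m ≥ 1 (evaluated on ℂ via ℤ → ℂ), and let c > 1 be such that |p((φ z)⁻¹)| ≥ c for every z ∈ U with φ z ≠ 0. Define F : ℂ → ℂ by F z = 0 if φ z = 0 and F z = (p((φ z)⁻¹))⁻¹ otherwise. Then F is analytic on U (in particular, the apparent singularities of 1/p(1/φ) at the zeros of φ are removable and F is the holomorphic extension). -/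
theorem stmt_9 (U : Set ℂ) (hU : IsOpen U) (φ : ℂ → ℂ) (hφ : AnalyticOnNhd ℂ φ U)
    (p : Polynomial ℤ) (m : ℕ) (hm : 1 ≤ m) (hpm : p.Monic) (hpd : p.natDegree = m)
    (c : ℝ) (hc : 1 < c)
    (hbound : ∀ z ∈ U, φ z ≠ 0 →
      c ≤ ‖(p.map (algebraMap ℤ ℂ)).eval (φ z)⁻¹‖) :
    AnalyticOnNhd ℂ
      (fun z => if φ z = 0 then 0 else ((p.map (algebraMap ℤ ℂ)).eval (φ z)⁻¹)⁻¹) U := by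
  set q : Polynomial ℂ := p.map (algebraMap ℤ ℂ) with hq
  have hqm : q.Monic := hpm.map _
  have hqd : q.natDegree = m := by rw [hq, hpm.natDegree_map, hpd]
  set a : ℕ → ℂ := fun i => q.coeff i with ha
  have ham : a m = 1 := by
    have := hqm
    rw [Polynomial.Monic, Polynomial.leadingCoeff, hqd] at this
    exact this
  set g : ℂ → ℂ := fun z => ∑ i ∈ Finset.range (m + 1), a i * (φ z) ^ (m - i) with hg
  -- key identity for nonzero w
  have key : ∀ w : ℂ, w ≠ 0 →
      (∑ i ∈ Finset.range (m + 1), a i * w ^ (m - i)) = w ^ m * q.eval w⁻¹ := by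
    intro w hw
    have heval : q.eval w⁻¹ = ∑ i ∈ Finset.range (m + 1), a i * (w⁻¹) ^ i := by
      rw [Polynomial.eval_eq_sum_range, hqd]
    rw [heval, Finset.mul_sum]
    apply Finset.sum_congr rfl
    intro i hi
    have hle : i ≤ m := Nat.lt_succ_iff.mp (Finset.mem_range.mp hi)
    have : w ^ m = w ^ (m - i) * w ^ i := by
      rw [← pow_add, Nat.sub_add_cancel hle]
    rw [this]
    field_simp
    ring_nf
    rw [mul_assoc, ← mul_pow, mul_inv_cancel₀ hw, one_pow, mul_one]
  -- g is nonzero on U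
  have hgne : ∀ z ∈ U, g z ≠ 0 := by
    intro z hz
    by_cases h0 : φ z = 0
    · have : g z = 1 := by
        rw [hg]
        simp only [h0]
        rw [Finset.sum_eq_single_of_mem m (Finset.self_mem_range_succ m)]
        · simp [ham]
        · intro i hi hne
          have hle : i ≤ m := Nat.lt_succ_iff.mp (Finset.mem_range.mp hi)
          have : 0 < m - i := Nat.sub_pos_of_lt (lt_of_le_of_ne hle hne)
          simp only [zero_pow this.ne', mul_zero]
      rw [this]; exact one_ne_zero
    · have hb := hbound z hz h0
      have hPne : q.eval (φ z)⁻¹ ≠ 0 := by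
        intro h
        rw [h] at hb
        simp at hb
        linarith
      rw [hg]
      simp only
      rw [key (φ z) h0]
      exact mul_ne_zero (pow_ne_zero _ h0) hPne
  -- g is analytic on U
  have hgan : AnalyticOnNhd ℂ g U := by
    intro z hz
    apply Finset.analyticAt_fun_sum
    intro i _
    exact (analyticAt_const).mul ((hφ z hz).pow _)
  -- the target equals φ^m * g⁻¹ on U
  have htarget : AnalyticOnNhd ℂ (fun z => (φ z) ^ m * (g z)⁻¹) U := by
    intro z hz
    exact ((hφ z hz).pow m).mul ((hgan z hz).inv (hgne z hz))
  intro z hz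
  apply (htarget z hz).congr
  filter_upwards [hU.mem_nhds hz] with w hw
  by_cases h0 : φ w = 0
  · simp only [h0, if_pos]
    rw [zero_pow (by omega : m ≠ 0), zero_mul]
  · rw [if_neg h0]
    have hgw : g w = (φ w) ^ m * q.eval (φ w)⁻¹ := key (φ w) h0
    rw [hgw, mul_inv, ← mul_assoc, mul_inv_cancel₀ (pow_ne_zero _ h0), one_mul]
end
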